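/- Assume 0 < β ≤ 1/(1−α/2) and −min(β, (1−β·(1−α))/α) < δ ≤ 0. Let (μ_t)_{t>0} be an ATS mixing family and let σ̂ : (0,∞) → (0,∞) be an ATM implied volatility for (μ_t). Then σ̂_t·√t → 0 as t → 0⁺. -/

import Mathlib

open MeasureTheory Real Filter Set Topology Asymptotics

/-- The ATS Laplace transform `L_t(u)` with parameters `α ∈ (0,1)`, `k̄ > 0`, `β ∈ ℝ`,
where `k_t = k̄·t^β`. -/
noncomputable def ATSLaplace (α kbar β : ℝ) (t u : ℝ) : ℝ :=
  Real.exp ((t / (kbar * t ^ β)) * ((1 - α) / α) *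
    (1 - (1 + u * (kbar * t ^ β) / ((1 - α) * t)) ^ α))

/-- Standard normal cumulative distribution function. -/
noncomputable def stdN (z : ℝ) : ℝ :=
  (Real.sqrt (2 * Real.pi))⁻¹ * ∫ x in Set.Iic z, Real.exp (-x ^ 2 / 2)

/-- Standard normal probability density function. -/
noncomputable def stdNd (z : ℝ) : ℝ :=
  (Real.sqrt (2 * Real.pi))⁻¹ * Real.exp (-z ^ 2 / 2)

/-- The drift `φ_t`, defined by `φ_t·t = −ln L_t(t·σ̄²·η_t)` with `η_t = η̄·t^δ`. -/
noncomputable def ATSphi (α kbar σbar ηbar β δ : ℝ) (t : ℝ) : ℝ :=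
  -Real.log (ATSLaplace α kbar β t (t * σbar ^ 2 * (ηbar * t ^ δ))) / t

/-- The quantity `l_t^z = −σ̄·η_t·√(z·t) + φ_t·√t/(σ̄·√z)`. -/
noncomputable def ATSl (α kbar σbar ηbar β δ : ℝ) (t z : ℝ) : ℝ :=
  -(σbar * (ηbar * t ^ δ)) * Real.sqrt (z * t) +
    ATSphi α kbar σbar ηbar β δ t * Real.sqrt t / (σbar * Real.sqrt z)

/-- The ATM ATS call price `C_t`. -/
noncomputable def ATSCall (α kbar σbar ηbar β δ : ℝ) (μ : Measure ℝ) (t : ℝ) : ℝ :=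
  ∫ z, (Real.exp (ATSphi α kbar σbar ηbar β δ t * t - t * σbar ^ 2 * (ηbar * t ^ δ) * z) *
      stdN (ATSl α kbar σbar ηbar β δ t z + σbar * Real.sqrt (z * t) / 2) -
      stdN (ATSl α kbar σbar ηbar β δ t z - σbar * Real.sqrt (z * t) / 2)) ∂μ

/-- The skew term `ξ̂_t`. -/
noncomputable def ATSSkew (α kbar σbar ηbar β δ : ℝ) (μ : Measure ℝ) (σhat : ℝ → ℝ)
    (t : ℝ) : ℝ :=
  (stdN (-(σhat t * Real.sqrt t / 2)) -
      ∫ z, stdN (ATSl α kbar σbar ηbar β δ t z - σbar * Real.sqrt (z * t) / 2) ∂μ) /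
    stdNd (-(σhat t * Real.sqrt t / 2))

section ATSAux


lemma gss_eq : (fun x : ℝ => Real.exp (-x ^ 2 / 2)) = fun x => Real.exp (-(1/2) * x ^ 2) := by
  funext x; congr 1; ring

lemma gss_integrable : Integrable (fun x : ℝ => Real.exp (-x ^ 2 / 2)) := by
  rw [gss_eq]; exact integrable_exp_neg_mul_sq (by norm_num)

lemma gss_total : (∫ x : ℝ, Real.exp (-x ^ 2 / 2)) = Real.sqrt (2 * Real.pi) := by
  rw [gss_eq, integral_gaussian]
  congr 1; ring

lemma sqrt2pi_pos : 0 < Real.sqrt (2 * Real.pi) :=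
  Real.sqrt_pos.mpr (by positivity)

lemma one_le_sqrt2pi : 1 ≤ Real.sqrt (2 * Real.pi) := by
  rw [show (1:ℝ) = Real.sqrt 1 by simp]
  exact Real.sqrt_le_sqrt (by nlinarith [Real.pi_gt_three])

lemma stdN_nonneg (z : ℝ) : 0 ≤ stdN z := by
  unfold stdN
  have : 0 ≤ ∫ x in Set.Iic z, Real.exp (-x ^ 2 / 2) :=
    integral_nonneg fun x => (Real.exp_pos _).le
  positivity

lemma stdN_le_one (z : ℝ) : stdN z ≤ 1 := by
  unfold stdN
  have h1 : (∫ x in Set.Iic z, Real.exp (-x ^ 2 / 2)) ≤ ∫ x : ℝ, Real.exp (-x ^ 2 / 2) :=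
    setIntegral_le_integral gss_integrable (Filter.Eventually.of_forall fun x => (Real.exp_pos _).le)
  rw [gss_total] at h1
  calc (Real.sqrt (2 * Real.pi))⁻¹ * ∫ x in Set.Iic z, Real.exp (-x ^ 2 / 2)
      ≤ (Real.sqrt (2 * Real.pi))⁻¹ * Real.sqrt (2 * Real.pi) := by
        apply mul_le_mul_of_nonneg_left h1 (by positivity)
    _ = 1 := inv_mul_cancel₀ (ne_of_gt sqrt2pi_pos)

lemma stdN_mono : Monotone stdN := by
  intro a b hab
  unfold stdN
  apply mul_le_mul_of_nonneg_left _ (by positivity)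
  apply setIntegral_mono_set gss_integrable.integrableOn
    (Filter.Eventually.of_forall fun x => (Real.exp_pos _).le)
  exact (Set.Iic_subset_Iic.mpr hab).eventuallyLE

lemma stdN_measurable : Measurable stdN := stdN_mono.measurable

lemma stdN_sub_eq {a b : ℝ} (hab : a ≤ b) :
    stdN b - stdN a = (Real.sqrt (2 * Real.pi))⁻¹ * ∫ x in Set.Ioc a b, Real.exp (-x ^ 2 / 2) := by
  unfold stdN
  rw [← mul_sub]
  congr 1
  rw [intervalIntegral.integral_Iic_sub_Iic gss_integrable.integrableOn gss_integrable.integrableOn,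
    intervalIntegral.integral_of_le hab]

lemma stdN_lipschitz {a b : ℝ} (hab : a ≤ b) :
    stdN b - stdN a ≤ (Real.sqrt (2 * Real.pi))⁻¹ * (b - a) := by
  rw [stdN_sub_eq hab]
  apply mul_le_mul_of_nonneg_left _ (by positivity)
  calc (∫ x in Set.Ioc a b, Real.exp (-x ^ 2 / 2))
      ≤ ∫ _x in Set.Ioc a b, (1:ℝ) := by
        apply setIntegral_mono_on gss_integrable.integrableOn (integrable_const 1)
          measurableSet_Ioc
        intro x _
        rw [Real.exp_le_one_iff]
        nlinarith [sq_nonneg x]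
    _ = b - a := by
        rw [setIntegral_const]
        simp [Real.volume_Ioc, ENNReal.toReal_ofReal (sub_nonneg.mpr hab), hab]

lemma stdN_gap_pos {e : ℝ} (he : 0 < e) : 0 < stdN e - stdN (-e) := by
  rw [stdN_sub_eq (by linarith)]
  apply mul_pos (by positivity)
  have h1 : (∫ _x in Set.Ioc (-e) e, Real.exp (-e ^ 2 / 2)) ≤
      ∫ x in Set.Ioc (-e) e, Real.exp (-x ^ 2 / 2) := by
    apply setIntegral_mono_on (integrable_const _) gss_integrable.integrableOn measurableSet_Ioc
    intro x hx
    have : x ^ 2 ≤ e ^ 2 := by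
      rcases hx with ⟨h1, h2⟩; nlinarith
    apply Real.exp_le_exp.mpr; linarith
  have h2 : (∫ _x in Set.Ioc (-e) e, Real.exp (-e ^ 2 / 2)) = (e - (-e)) * Real.exp (-e ^ 2 / 2) := by
    rw [setIntegral_const]
    rw [Real.volume_real_Ioc_of_le (by linarith : -e ≤ e), smul_eq_mul]
  have h3 : (0:ℝ) < e - (-e) := by linarith
  have : 0 < (e - (-e)) * Real.exp (-e ^ 2 / 2) := by positivity
  linarith


lemma rpow_diff_le {α x y : ℝ} (hα0 : 0 < α) (hα1 : α ≤ 1) (hx : 0 ≤ x) (hy : 0 ≤ y) :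
    (1 + (x + y)) ^ α ≤ (1 + x) ^ α + α * y := by
  have h1x : (0:ℝ) < 1 + x := by linarith
  have key : (1 + (x + y)) = (1 + x) * (1 + y / (1 + x)) := by field_simp; ring
  rw [key, Real.mul_rpow (by positivity) (by positivity)]
  have hb : (1 + y / (1 + x)) ^ α ≤ 1 + α * (y / (1 + x)) :=
    rpow_one_add_le_one_add_mul_self (by nlinarith [div_nonneg hy h1x.le] : (-1:ℝ) ≤ y / (1 + x)) hα0.le hα1
  have hble : (1 + x) ^ α ≤ 1 + x := by
    calc (1 + x) ^ α ≤ (1 + x) ^ (1:ℝ) :=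
          Real.rpow_le_rpow_of_exponent_le (by linarith) hα1
      _ = 1 + x := Real.rpow_one _
  have hpow_nonneg : (0:ℝ) ≤ (1 + x) ^ α := Real.rpow_nonneg (by linarith) _
  calc (1 + x) ^ α * (1 + y / (1 + x)) ^ α
      ≤ (1 + x) ^ α * (1 + α * (y / (1 + x))) := by
        apply mul_le_mul_of_nonneg_left hb hpow_nonneg
    _ = (1 + x) ^ α + (1 + x) ^ α / (1 + x) * (α * y) := by field_simp
    _ ≤ (1 + x) ^ α + 1 * (α * y) := by
        have : (1 + x) ^ α / (1 + x) ≤ 1 := by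
          rw [div_le_one h1x]; exact hble
        have hay : 0 ≤ α * y := by positivity
        nlinarith
    _ = (1 + x) ^ α + α * y := by ring

lemma rpow_bernoulli {α v : ℝ} (hα0 : 0 < α) (hα1 : α ≤ 1) (hv : 0 ≤ v) :
    (1 + v) ^ α ≤ 1 + α * v := by
  have := rpow_diff_le hα0 hα1 le_rfl hv (x := 0)
  simpa using this

lemma one_le_rpow_base {α v : ℝ} (hα0 : 0 ≤ α) (hv : 0 ≤ v) : (1:ℝ) ≤ (1 + v) ^ α := by
  calc (1:ℝ) = 1 ^ α := (Real.one_rpow _).symm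
    _ ≤ (1 + v) ^ α := Real.rpow_le_rpow (by norm_num) (by linarith) hα0

lemma sqrt_le_one_add (z : ℝ) (hz : 0 ≤ z) : Real.sqrt z ≤ 1 + z := by
  nlinarith [Real.sq_sqrt hz, Real.sqrt_nonneg z]

lemma exp_sub_one_le (x : ℝ) (hx : 0 ≤ x) : Real.exp x - 1 ≤ x * Real.exp x := by
  have key : Real.exp x * Real.exp (-x) = 1 := by rw [← Real.exp_add]; simp
  nlinarith [Real.add_one_le_exp (-x), Real.exp_pos x]

lemma integrable_exp_of_lap {P : Measure ℝ} {w L : ℝ}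
    (hL : (∫ x, Real.exp (-w * x) ∂P) = L) (hLpos : 0 < L) :
    Integrable (fun x => Real.exp (-w * x)) P := by
  by_contra h
  rw [MeasureTheory.integral_undef h] at hL
  linarith

lemma ats_g_bound1 {α c0 r u : ℝ} (hα0 : 0 < α) (hα1 : α ≤ 1) (hc0 : 0 ≤ c0) (hr : 0 ≤ r)
    (hu : 0 ≤ u) (hkey : c0 * (α * r) = 1) :
    c0 * (1 - (1 + u / 2 * r) ^ α) - c0 * (1 - (1 + u * r) ^ α) ≤ u / 2 := by
  have hx : (0:ℝ) ≤ u / 2 * r := by positivity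
  have hd := rpow_diff_le hα0 hα1 hx hx
  have e1 : (1:ℝ) + u * r = 1 + (u / 2 * r + u / 2 * r) := by ring
  rw [← e1] at hd
  have h2 : c0 * ((1 + u * r) ^ α - (1 + u / 2 * r) ^ α) ≤ c0 * (α * (u / 2 * r)) := by
    apply mul_le_mul_of_nonneg_left _ hc0
    linarith
  have h3 : c0 * (α * (u / 2 * r)) = u / 2 := by linear_combination (u / 2) * hkey
  nlinarith

lemma ats_g_bound2 {α c0 r u : ℝ} (hα0 : 0 < α) (hα1 : α ≤ 1) (hc0 : 0 ≤ c0) (hr : 0 ≤ r)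
    (hu : 0 ≤ u) (hkey : c0 * (α * r) = 1) :
    c0 * (1 - (1 + 2 * u * r) ^ α) - 2 * (c0 * (1 - (1 + u * r) ^ α)) ≤ 2 * u := by
  have hb := rpow_bernoulli hα0 hα1 (v := u * r) (by positivity)
  have h1 : (1:ℝ) ≤ (1 + 2 * u * r) ^ α := by
    exact one_le_rpow_base (v := 2 * u * r) hα0.le (by positivity)
  have h2 : c0 * (2 * (1 + u * r) ^ α - (1 + 2 * u * r) ^ α - 1) ≤ c0 * (2 * (α * (u * r))) := by
    apply mul_le_mul_of_nonneg_left _ hc0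
    linarith
  have h3 : c0 * (2 * (α * (u * r))) = 2 * u := by linear_combination (2 * u) * hkey
  nlinarith

lemma core_bound {P : Measure ℝ} [IsProbabilityMeasure P] {t σb u gu gu2 g2u φv ε' : ℝ}
    (ht : 0 < t) (hσ : 0 < σb) (hu : 0 < u) (hu1 : u ≤ 1) (hε' : 0 < ε')
    (hsupp : P (Set.Iio 0) = 0)
    (w : ℝ → ℝ) (hw : Measurable w)
    (hLu : (∫ z, Real.exp (-u * z) ∂P) = Real.exp gu)
    (hLu2 : (∫ z, Real.exp (-(u / 2) * z) ∂P) = Real.exp gu2)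
    (hL2u : (∫ z, Real.exp (-(2 * u) * z) ∂P) = Real.exp g2u)
    (hg1 : gu2 - gu ≤ u / 2) (hg2 : g2u - 2 * gu ≤ 2 * u)
    (hφ : φv = -gu) :
    (∫ z, (Real.exp (φv - u * z) * stdN (w z + σb * Real.sqrt (z * t) / 2)
        - stdN (w z - σb * Real.sqrt (z * t) / 2)) ∂P)
      ≤ σb * Real.sqrt t * (1 + Real.exp 1)
        + (ε' ^ 2 + (Real.exp (2 * u) - 1)) / (2 * ε') := by
  have hae : ∀ᵐ z ∂P, 0 ≤ z := by
    rw [ae_iff]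
    have h0 : {z : ℝ | ¬ 0 ≤ z} = Set.Iio 0 := by ext z; simp [not_le, Set.mem_Iio]
    rw [h0]; exact hsupp
  have Iu : Integrable (fun z => Real.exp (-u * z)) P :=
    integrable_exp_of_lap hLu (Real.exp_pos _)
  have Iu2 : Integrable (fun z => Real.exp (-(u / 2) * z)) P :=
    integrable_exp_of_lap hLu2 (Real.exp_pos _)
  have I2u : Integrable (fun z => Real.exp (-(2 * u) * z)) P :=
    integrable_exp_of_lap hL2u (Real.exp_pos _)
  have hbd : ∀ z : ℝ, 0 ≤ z →
      z * Real.exp (-u * z) ≤ (2 / u) * (Real.exp (-(u / 2) * z) - Real.exp (-u * z)) := by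
    intro z hz
    have h1 : u * z / 2 + 1 ≤ Real.exp (u * z / 2) := Real.add_one_le_exp _
    have h2 : Real.exp (-u * z) * Real.exp (u * z / 2) = Real.exp (-(u / 2) * z) := by
      rw [← Real.exp_add]; congr 1; ring
    have h3 : Real.exp (-u * z) * (u * z / 2) ≤ Real.exp (-(u / 2) * z) - Real.exp (-u * z) := by
      nlinarith [Real.exp_pos (-u * z)]
    have h4 : (2 / u) * (Real.exp (-u * z) * (u * z / 2)) = z * Real.exp (-u * z) := by
      field_simp
    nlinarith [mul_le_mul_of_nonneg_left h3 (by positivity : (0:ℝ) ≤ 2 / u)]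
  have Izu : Integrable (fun z => z * Real.exp (-u * z)) P := by
    apply Integrable.mono' ((Iu2.sub Iu).const_mul (2 / u))
    · exact (measurable_id.mul
        (Real.measurable_exp.comp (measurable_const.mul measurable_id))).aestronglyMeasurable
    · filter_upwards [hae] with z hz
      rw [Real.norm_eq_abs, abs_of_nonneg (by positivity)]
      exact hbd z hz
  have hS_eq : ∀ z : ℝ, Real.exp (φv - u * z) = Real.exp (-gu) * Real.exp (-u * z) := by
    intro z
    rw [← Real.exp_add]
    congr 1
    rw [hφ]
    ring
  have hS_int : Integrable (fun z => Real.exp (φv - u * z)) P := by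
    simp only [hS_eq]; exact Iu.const_mul _
  have hS1 : (∫ z, Real.exp (φv - u * z) ∂P) = 1 := by
    simp only [hS_eq]
    rw [integral_const_mul, hLu, ← Real.exp_add]
    simp
  have hSz_eq : (fun z => Real.exp (φv - u * z) * z)
      = fun z => Real.exp (-gu) * (z * Real.exp (-u * z)) := by
    funext z; rw [hS_eq]; ring
  have hSz_int : Integrable (fun z => Real.exp (φv - u * z) * z) P := by
    rw [hSz_eq]; exact Izu.const_mul _
  have hSz : (∫ z, Real.exp (φv - u * z) * z ∂P) ≤ Real.exp 1 := by
    have h1 : (∫ z, z * Real.exp (-u * z) ∂P) ≤ (2 / u) * (Real.exp gu2 - Real.exp gu) := by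
      have hm := integral_mono_ae Izu ((Iu2.sub Iu).const_mul (2 / u))
        (by filter_upwards [hae] with z hz; exact hbd z hz)
      calc (∫ z, z * Real.exp (-u * z) ∂P)
          ≤ ∫ z, (2 / u) * (Real.exp (-(u / 2) * z) - Real.exp (-u * z)) ∂P := hm
        _ = (2 / u) * ((∫ z, Real.exp (-(u / 2) * z) ∂P) - ∫ z, Real.exp (-u * z) ∂P) := by
            rw [integral_const_mul, integral_sub Iu2 Iu]
        _ = (2 / u) * (Real.exp gu2 - Real.exp gu) := by rw [hLu2, hLu]
    calc (∫ z, Real.exp (φv - u * z) * z ∂P)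
        = Real.exp (-gu) * ∫ z, z * Real.exp (-u * z) ∂P := by
          rw [hSz_eq, integral_const_mul]
      _ ≤ Real.exp (-gu) * ((2 / u) * (Real.exp gu2 - Real.exp gu)) :=
          mul_le_mul_of_nonneg_left h1 (Real.exp_pos _).le
      _ = (2 / u) * (Real.exp (gu2 - gu) - 1) := by
          have m1 : Real.exp (-gu) * Real.exp gu2 = Real.exp (gu2 - gu) := by
            rw [← Real.exp_add]; congr 1; ring
          have m2 : Real.exp (-gu) * Real.exp gu = 1 := by rw [← Real.exp_add]; simp
          linear_combination (2 / u) * m1 - (2 / u) * m2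
      _ ≤ (2 / u) * (Real.exp (u / 2) - 1) := by
          have := Real.exp_le_exp.mpr hg1
          have h20 : (0:ℝ) ≤ 2 / u := by positivity
          nlinarith
      _ ≤ Real.exp (u / 2) := by
          have h2 := exp_sub_one_le (u / 2) (by positivity)
          rw [div_mul_eq_mul_div, div_le_iff₀ hu]
          nlinarith [Real.exp_pos (u / 2)]
      _ ≤ Real.exp 1 := Real.exp_le_exp.mpr (by linarith)
  -- second moment of S - 1
  have e : (fun z => (Real.exp (φv - u * z) - 1) ^ 2)
      = fun z => (Real.exp (-gu)) ^ 2 * Real.exp (-(2 * u) * z)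
          - 2 * (Real.exp (-gu) * Real.exp (-u * z)) + 1 := by
    funext z
    have key : Real.exp (-u * z) * Real.exp (-u * z) = Real.exp (-(2 * u) * z) := by
      rw [← Real.exp_add]; congr 1; ring
    rw [hS_eq]
    linear_combination (Real.exp (-gu)) ^ 2 * key
  have i1 : Integrable (fun z => (Real.exp (-gu)) ^ 2 * Real.exp (-(2 * u) * z)) P :=
    I2u.const_mul _
  have i2 : Integrable (fun z => 2 * (Real.exp (-gu) * Real.exp (-u * z))) P := by
    have h2 : (fun z => 2 * (Real.exp (-gu) * Real.exp (-u * z)))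
        = fun z => (2 * Real.exp (-gu)) * Real.exp (-u * z) := by funext z; ring
    rw [h2]; exact Iu.const_mul _
  have i12 : Integrable (fun z => (Real.exp (-gu)) ^ 2 * Real.exp (-(2 * u) * z)
      - 2 * (Real.exp (-gu) * Real.exp (-u * z))) P := i1.sub i2
  have Isq : Integrable (fun z => (Real.exp (φv - u * z) - 1) ^ 2) P := by
    rw [e]
    exact i12.add (integrable_const 1)
  have hsq_val : (∫ z, (Real.exp (φv - u * z) - 1) ^ 2 ∂P) ≤ Real.exp (2 * u) - 1 := by
    rw [e, integral_add i12 (integrable_const 1), integral_sub i1 i2,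
      integral_const_mul, integral_const_mul, integral_const_mul, hL2u, hLu, integral_const]
    have k1 : Real.exp (-gu) * Real.exp gu = 1 := by rw [← Real.exp_add]; simp
    have k2 : (Real.exp (-gu)) ^ 2 * Real.exp g2u = Real.exp (g2u - 2 * gu) := by
      rw [sq, mul_assoc, ← Real.exp_add, ← Real.exp_add]; congr 1; ring
    have k3 := Real.exp_le_exp.mpr hg2
    simp only [measure_univ, probReal_univ, ENNReal.toReal_one, smul_eq_mul, mul_one, one_smul]
    nlinarith
  have habs_int : Integrable (fun z => |Real.exp (φv - u * z) - 1|) P :=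
    (hS_int.sub (integrable_const 1)).abs
  have habs : (∫ z, |Real.exp (φv - u * z) - 1| ∂P)
      ≤ (ε' ^ 2 + (Real.exp (2 * u) - 1)) / (2 * ε') := by
    have hpt : ∀ z : ℝ, |Real.exp (φv - u * z) - 1|
        ≤ (ε' ^ 2 + (Real.exp (φv - u * z) - 1) ^ 2) / (2 * ε') := by
      intro z
      rw [le_div_iff₀ (by positivity)]
      nlinarith [sq_nonneg (|Real.exp (φv - u * z) - 1| - ε'),
        sq_abs (Real.exp (φv - u * z) - 1), abs_nonneg (Real.exp (φv - u * z) - 1)]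
    have hrhs_int : Integrable
        (fun z => (ε' ^ 2 + (Real.exp (φv - u * z) - 1) ^ 2) / (2 * ε')) P :=
      ((integrable_const _).add Isq).div_const _
    calc (∫ z, |Real.exp (φv - u * z) - 1| ∂P)
        ≤ ∫ z, (ε' ^ 2 + (Real.exp (φv - u * z) - 1) ^ 2) / (2 * ε') ∂P :=
          integral_mono habs_int hrhs_int hpt
      _ = (ε' ^ 2 + ∫ z, (Real.exp (φv - u * z) - 1) ^ 2 ∂P) / (2 * ε') := by
          rw [integral_div, integral_add (integrable_const _) Isq, integral_const]
          simp [measure_univ]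
      _ ≤ (ε' ^ 2 + (Real.exp (2 * u) - 1)) / (2 * ε') := by gcongr
  -- pointwise bound on the call integrand
  have hptf : ∀ᵐ z ∂P,
      Real.exp (φv - u * z) * stdN (w z + σb * Real.sqrt (z * t) / 2)
          - stdN (w z - σb * Real.sqrt (z * t) / 2)
        ≤ σb * Real.sqrt t * (Real.exp (φv - u * z) * (1 + z))
          + |Real.exp (φv - u * z) - 1| := by
    filter_upwards [hae] with z hz
    have hs0 : 0 ≤ σb * Real.sqrt (z * t) := by positivity
    have harg : w z - σb * Real.sqrt (z * t) / 2 ≤ w z + σb * Real.sqrt (z * t) / 2 := by linarith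
    have hlip := stdN_lipschitz harg
    have hba : w z + σb * Real.sqrt (z * t) / 2 - (w z - σb * Real.sqrt (z * t) / 2)
        = σb * Real.sqrt (z * t) := by ring
    rw [hba] at hlip
    have h2π : (0:ℝ) < Real.sqrt (2 * Real.pi) := lt_of_lt_of_le one_pos one_le_sqrt2pi
    have hinv : (Real.sqrt (2 * Real.pi))⁻¹ ≤ 1 := by
      rw [inv_le_one_iff₀]; right; exact one_le_sqrt2pi
    have hN1 : stdN (w z + σb * Real.sqrt (z * t) / 2)
        ≤ stdN (w z - σb * Real.sqrt (z * t) / 2) + σb * Real.sqrt (z * t) := by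
      have := mul_le_of_le_one_left hs0 hinv
      linarith
    have hE : (0:ℝ) < Real.exp (φv - u * z) := Real.exp_pos _
    have hN2a : 0 ≤ stdN (w z - σb * Real.sqrt (z * t) / 2) := stdN_nonneg _
    have hN2b : stdN (w z - σb * Real.sqrt (z * t) / 2) ≤ 1 := stdN_le_one _
    have key2 : (Real.exp (φv - u * z) - 1) * stdN (w z - σb * Real.sqrt (z * t) / 2)
        ≤ |Real.exp (φv - u * z) - 1| := by
      calc (Real.exp (φv - u * z) - 1) * stdN (w z - σb * Real.sqrt (z * t) / 2)
          ≤ |Real.exp (φv - u * z) - 1| * stdN (w z - σb * Real.sqrt (z * t) / 2) :=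
            mul_le_mul_of_nonneg_right (le_abs_self _) hN2a
        _ ≤ |Real.exp (φv - u * z) - 1| * 1 :=
            mul_le_mul_of_nonneg_left hN2b (abs_nonneg _)
        _ = |Real.exp (φv - u * z) - 1| := mul_one _
    have hsqrtzt : Real.sqrt (z * t) = Real.sqrt z * Real.sqrt t := Real.sqrt_mul hz t
    have hsz : Real.sqrt z ≤ 1 + z := sqrt_le_one_add z hz
    have hst : (0:ℝ) ≤ Real.sqrt t := Real.sqrt_nonneg t
    have key3 : Real.exp (φv - u * z) * (σb * Real.sqrt (z * t))
        ≤ σb * Real.sqrt t * (Real.exp (φv - u * z) * (1 + z)) := by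
      rw [hsqrtzt]
      have h5 := mul_le_mul_of_nonneg_left hsz
        (by positivity : (0:ℝ) ≤ σb * Real.sqrt t * Real.exp (φv - u * z))
      have heq1 : Real.exp (φv - u * z) * (σb * (Real.sqrt z * Real.sqrt t))
          = σb * Real.sqrt t * Real.exp (φv - u * z) * Real.sqrt z := by ring
      have heq2 : σb * Real.sqrt t * Real.exp (φv - u * z) * (1 + z)
          = σb * Real.sqrt t * (Real.exp (φv - u * z) * (1 + z)) := by ring
      linarith
    have expand := mul_le_mul_of_nonneg_left hN1 hE.le
    have hdistr : Real.exp (φv - u * z) * (stdN (w z - σb * Real.sqrt (z * t) / 2)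
          + σb * Real.sqrt (z * t))
        = Real.exp (φv - u * z) * stdN (w z - σb * Real.sqrt (z * t) / 2)
          + Real.exp (φv - u * z) * (σb * Real.sqrt (z * t)) := by ring
    rw [hdistr] at expand
    have hfin : (Real.exp (φv - u * z) - 1) * stdN (w z - σb * Real.sqrt (z * t) / 2)
        = Real.exp (φv - u * z) * stdN (w z - σb * Real.sqrt (z * t) / 2)
          - stdN (w z - σb * Real.sqrt (z * t) / 2) := by ring
    linarith [key2, key3, expand, hfin.le, hfin.ge]
  -- integrability of the call integrand
  have hm1 : Measurable (fun z => σb * Real.sqrt (z * t) / 2) :=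
    ((Real.continuous_sqrt.measurable.comp (measurable_id.mul_const t)).const_mul σb).div_const 2
  have hfm : Measurable (fun z => Real.exp (φv - u * z) * stdN (w z + σb * Real.sqrt (z * t) / 2)
      - stdN (w z - σb * Real.sqrt (z * t) / 2)) := by
    apply Measurable.sub
    · exact (Real.measurable_exp.comp
        (measurable_const.sub (measurable_const.mul measurable_id))).mul
        (stdN_measurable.comp (hw.add hm1))
    · exact stdN_measurable.comp (hw.sub hm1)
  have hf_int : Integrable (fun z => Real.exp (φv - u * z) *
      stdN (w z + σb * Real.sqrt (z * t) / 2)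
      - stdN (w z - σb * Real.sqrt (z * t) / 2)) P := by
    apply Integrable.mono' (hS_int.add (integrable_const 1)) hfm.aestronglyMeasurable
    filter_upwards with z
    simp only [Pi.add_apply]
    rw [Real.norm_eq_abs, abs_le]
    have p1 : 0 ≤ Real.exp (φv - u * z) * stdN (w z + σb * Real.sqrt (z * t) / 2) :=
      mul_nonneg (Real.exp_pos _).le (stdN_nonneg _)
    have p2 : Real.exp (φv - u * z) * stdN (w z + σb * Real.sqrt (z * t) / 2)
        ≤ Real.exp (φv - u * z) :=
      mul_le_of_le_one_right (Real.exp_pos _).le (stdN_le_one _)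
    constructor
    · linarith [stdN_le_one (w z - σb * Real.sqrt (z * t) / 2)]
    · linarith [stdN_nonneg (w z - σb * Real.sqrt (z * t) / 2)]
  -- the dominating function and its integral
  have hB1_eq : (fun z => σb * Real.sqrt t * (Real.exp (φv - u * z) * (1 + z)))
      = fun z => σb * Real.sqrt t *
          (Real.exp (φv - u * z) + Real.exp (φv - u * z) * z) := by
    funext z; ring
  have hB1_int : Integrable (fun z => σb * Real.sqrt t * (Real.exp (φv - u * z) * (1 + z))) P := by
    rw [hB1_eq]
    exact (hS_int.add hSz_int).const_mul _
  have hB_int : Integrable (fun z => σb * Real.sqrt t * (Real.exp (φv - u * z) * (1 + z))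
      + |Real.exp (φv - u * z) - 1|) P := hB1_int.add habs_int
  calc (∫ z, (Real.exp (φv - u * z) * stdN (w z + σb * Real.sqrt (z * t) / 2)
        - stdN (w z - σb * Real.sqrt (z * t) / 2)) ∂P)
      ≤ ∫ z, (σb * Real.sqrt t * (Real.exp (φv - u * z) * (1 + z))
          + |Real.exp (φv - u * z) - 1|) ∂P := integral_mono_ae hf_int hB_int hptf
    _ = σb * Real.sqrt t * ((∫ z, Real.exp (φv - u * z) ∂P)
          + ∫ z, Real.exp (φv - u * z) * z ∂P)
        + ∫ z, |Real.exp (φv - u * z) - 1| ∂P := by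
        rw [integral_add hB1_int habs_int, hB1_eq, integral_const_mul,
          integral_add hS_int hSz_int]
    _ ≤ σb * Real.sqrt t * (1 + Real.exp 1) + (ε' ^ 2 + (Real.exp (2 * u) - 1)) / (2 * ε') := by
        have hc : (0:ℝ) ≤ σb * Real.sqrt t := by positivity
        have : (∫ z, Real.exp (φv - u * z) ∂P) + (∫ z, Real.exp (φv - u * z) * z ∂P)
            ≤ 1 + Real.exp 1 := by rw [hS1]; linarith
        exact add_le_add (mul_le_mul_of_nonneg_left this hc) habs

lemma key_bound (α kbar σbar ηbar β δ : ℝ) (hα0 : 0 < α) (hα1 : α < 1) (hk : 0 < kbar)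
    (hσ : 0 < σbar) (hη : 0 < ηbar) {t : ℝ} (ht : 0 < t)
    (P : Measure ℝ) [IsProbabilityMeasure P] (hsupp : P (Set.Iio 0) = 0)
    (hlap : ∀ u ≥ 0, (∫ x, Real.exp (-u * x) ∂P) = ATSLaplace α kbar β t u)
    (hu1 : t * σbar ^ 2 * (ηbar * t ^ δ) ≤ 1) {ε' : ℝ} (hε' : 0 < ε') :
    ATSCall α kbar σbar ηbar β δ P t ≤
      σbar * Real.sqrt t * (1 + Real.exp 1) +
      (ε' ^ 2 + (Real.exp (2 * (t * σbar ^ 2 * (ηbar * t ^ δ))) - 1)) / (2 * ε') := by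
  have htδ : (0:ℝ) < t ^ δ := Real.rpow_pos_of_pos ht δ
  have htβ : (0:ℝ) < t ^ β := Real.rpow_pos_of_pos ht β
  have h1α : (0:ℝ) < 1 - α := by linarith
  have hu : 0 < t * σbar ^ 2 * (ηbar * t ^ δ) := by positivity
  have hc0 : 0 < (t / (kbar * t ^ β)) * ((1 - α) / α) := by positivity
  have hr : 0 < (kbar * t ^ β) / ((1 - α) * t) := by positivity
  have hkey : ((t / (kbar * t ^ β)) * ((1 - α) / α))
      * (α * ((kbar * t ^ β) / ((1 - α) * t))) = 1 := by
    field_simp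
  have hALg : ∀ w : ℝ, ATSLaplace α kbar β t w
      = Real.exp ((t / (kbar * t ^ β)) * ((1 - α) / α) *
          (1 - (1 + w * ((kbar * t ^ β) / ((1 - α) * t))) ^ α)) := by
    intro w
    unfold ATSLaplace
    rw [mul_div_assoc]
  have hL : ∀ w : ℝ, 0 ≤ w → (∫ z, Real.exp (-w * z) ∂P)
      = Real.exp ((t / (kbar * t ^ β)) * ((1 - α) / α) *
          (1 - (1 + w * ((kbar * t ^ β) / ((1 - α) * t))) ^ α)) :=
    fun w hw => (hlap w hw).trans (hALg w)
  have hφ : ATSphi α kbar σbar ηbar β δ t * t = -((t / (kbar * t ^ β)) * ((1 - α) / α) *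
      (1 - (1 + (t * σbar ^ 2 * (ηbar * t ^ δ))
        * ((kbar * t ^ β) / ((1 - α) * t))) ^ α)) := by
    unfold ATSphi
    rw [hALg _, Real.log_exp]
    field_simp
  have hwm : Measurable (ATSl α kbar σbar ηbar β δ t) := by
    unfold ATSl
    apply Measurable.add
    · exact (Real.continuous_sqrt.measurable.comp (measurable_id.mul_const t)).const_mul _
    · exact measurable_const.div (Real.continuous_sqrt.measurable.const_mul σbar)
  unfold ATSCall
  exact core_bound ht hσ hu hu1 hε' hsupp (ATSl α kbar σbar ηbar β δ t) hwm
    (hL _ hu.le) (hL _ (by positivity)) (hL _ (by positivity))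
    (ats_g_bound1 hα0 hα1.le hc0.le hr.le hu.le hkey)
    (ats_g_bound2 hα0 hα1.le hc0.le hr.le hu.le hkey)
    hφ


end ATSAux

/-- over the admissible region, the ATM implied volatility satisfies
`σ̂_t·√t → 0` as `t → 0⁺`. -/
theorem stmt11 (α kbar σbar ηbar β δ : ℝ) (hα : α ∈ Set.Ioo (0:ℝ) 1)
    (hk : 0 < kbar) (hσ : 0 < σbar) (hη : 0 < ηbar)
    (hβ0 : 0 < β) (hβ : β ≤ 1 / (1 - α / 2))
    (hδl : -min β ((1 - β * (1 - α)) / α) < δ) (hδu : δ ≤ 0)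
    (μ : ℝ → Measure ℝ)
    (hprob : ∀ t > 0, IsProbabilityMeasure (μ t))
    (hsupp : ∀ t > 0, μ t (Set.Iio 0) = 0)
    (hlap : ∀ t > 0, ∀ u ≥ 0,
      (∫ x, Real.exp (-u * x) ∂(μ t)) = ATSLaplace α kbar β t u)
    (σhat : ℝ → ℝ) (hσpos : ∀ t > 0, 0 < σhat t)
    (hiv : ∀ t > 0,
      stdN (σhat t * Real.sqrt t / 2) - stdN (-(σhat t * Real.sqrt t / 2)) =
        ATSCall α kbar σbar ηbar β δ (μ t) t) :
    Tendsto (fun t => σhat t * Real.sqrt t) (𝓝[>] (0:ℝ)) (𝓝 0) := by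

  obtain ⟨hα0, hα1⟩ := hα
  have h1α : (0:ℝ) < 1 - α := by linarith
  have hmin1 : min β ((1 - β * (1 - α)) / α) ≤ 1 := by
    rcases le_or_gt β 1 with h | h
    · exact le_trans (min_le_left _ _) h
    · refine le_trans (min_le_right _ _) ?_
      rw [div_le_one hα0]
      nlinarith
  have h1δ : 0 < 1 + δ := by linarith
  have hu_tend : Tendsto (fun t => t * σbar ^ 2 * (ηbar * t ^ δ)) (𝓝[>] (0:ℝ)) (𝓝 0) := by
    have h0 : Tendsto (fun t : ℝ => t ^ (1 + δ)) (𝓝[>] (0:ℝ)) (𝓝 0) := by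
      have hc : ContinuousAt (fun t : ℝ => t ^ (1 + δ)) 0 :=
        Real.continuousAt_rpow_const 0 (1 + δ) (Or.inr h1δ.le)
      have h2 := hc.tendsto
      rw [Real.zero_rpow h1δ.ne'] at h2
      exact h2.mono_left nhdsWithin_le_nhds
    have h2 : Tendsto (fun t : ℝ => σbar ^ 2 * ηbar * t ^ (1 + δ)) (𝓝[>] (0:ℝ)) (𝓝 0) := by
      have h3 := h0.const_mul (σbar ^ 2 * ηbar)
      simpa using h3
    apply h2.congr'
    filter_upwards [self_mem_nhdsWithin] with t ht
    have ht0 : (0:ℝ) < t := ht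
    rw [Real.rpow_add ht0, Real.rpow_one]
    ring
  rw [Metric.tendsto_nhds]
  intro ε hε
  obtain ⟨ρ, hρ_def⟩ : ∃ ρ : ℝ, ρ = stdN (ε / 2) - stdN (-(ε / 2)) := ⟨_, rfl⟩
  have hρ : 0 < ρ := hρ_def ▸ stdN_gap_pos (by positivity)
  have hsqrtt : Tendsto (fun t : ℝ => σbar * Real.sqrt t * (1 + Real.exp 1)) (𝓝[>] (0:ℝ))
      (𝓝 0) := by
    have h1 : Tendsto (fun t : ℝ => Real.sqrt t) (𝓝[>] (0:ℝ)) (𝓝 0) := by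
      have h2 := Real.continuous_sqrt.tendsto 0
      rw [Real.sqrt_zero] at h2
      exact h2.mono_left nhdsWithin_le_nhds
    have h3 := (h1.const_mul σbar).mul_const (1 + Real.exp 1)
    simpa using h3
  have hexp : Tendsto (fun t : ℝ =>
      ((ρ / 2) ^ 2 + (Real.exp (2 * (t * σbar ^ 2 * (ηbar * t ^ δ))) - 1)) / (2 * (ρ / 2)))
      (𝓝[>] (0:ℝ)) (𝓝 (((ρ / 2) ^ 2 + (Real.exp (2 * 0) - 1)) / (2 * (ρ / 2)))) := by
    have h2 : Tendsto (fun t : ℝ => 2 * (t * σbar ^ 2 * (ηbar * t ^ δ))) (𝓝[>] (0:ℝ))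
        (𝓝 (2 * 0)) := hu_tend.const_mul 2
    have h3 := (Real.continuous_exp.tendsto (2 * 0)).comp h2
    exact (((h3.sub_const 1).const_add ((ρ / 2) ^ 2)).div_const (2 * (ρ / 2)))
  have hG_tend := hsqrtt.add hexp
  have hval : (0:ℝ) + ((ρ / 2) ^ 2 + (Real.exp (2 * 0) - 1)) / (2 * (ρ / 2)) = ρ / 4 := by
    rw [mul_zero, Real.exp_zero]
    field_simp
    ring
  rw [hval] at hG_tend
  have hev1 := hG_tend.eventually_lt_const (by linarith : ρ / 4 < ρ)
  have hev2 : ∀ᶠ t in 𝓝[>] (0:ℝ), t * σbar ^ 2 * (ηbar * t ^ δ) ≤ 1 :=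
    (hu_tend.eventually_lt_const (by norm_num : (0:ℝ) < 1)).mono fun t h => h.le
  filter_upwards [self_mem_nhdsWithin, hev1, hev2] with t ht hGt hut
  have ht0 : (0:ℝ) < t := ht
  haveI := hprob t ht0
  have hcall := key_bound α kbar σbar ηbar β δ hα0 hα1 hk hσ hη ht0 (μ t) (hsupp t ht0)
    (hlap t ht0) hut (by positivity : (0:ℝ) < ρ / 2)
  have hC : ATSCall α kbar σbar ηbar β δ (μ t) t < ρ := lt_of_le_of_lt hcall hGt
  have hiv' := hiv t ht0
  have hσh := hσpos t ht0
  have hst : 0 < Real.sqrt t := Real.sqrt_pos.mpr ht0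
  have hy : σhat t * Real.sqrt t / 2 < ε / 2 := by
    by_contra hcon
    push_neg at hcon
    have m1 : stdN (ε / 2) ≤ stdN (σhat t * Real.sqrt t / 2) := stdN_mono hcon
    have m2 : stdN (-(σhat t * Real.sqrt t / 2)) ≤ stdN (-(ε / 2)) := stdN_mono (by linarith)
    rw [hρ_def] at hC
    linarith
  rw [Real.dist_eq, sub_zero, abs_of_pos (mul_pos hσh hst)]
  linarith
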